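/- Let H be a complex Hilbert space, D a dictionary (a set of unit vectors whose closed linear span equals H), M > 0, and f ∈ H(D,M). Suppose the Orthogonal Greedy Algorithm produces selections ψ_1, ψ_2, … ∈ D: with H_0 = {0}, H_k = span{ψ_1,…,ψ_k}, residuals f_k = f − P_{H_{k-1}}(f), selection condition |⟨f_k, ψ_k⟩| ≥ sup_{ψ∈D} |⟨f_k, ψ⟩| (i.e., maximal selection), and v_k := ‖ψ_k − P_{H_{k-1}}(ψ_k)‖ > 0. Then for every n ≥ 1, ‖f_n‖ ≤ M/√n. -/

import Mathlib

noncomputable def proj {H : Type*} [NormedAddCommGroup H] [InnerProductSpace ℂ H]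
    [CompleteSpace H] (K : Submodule ℂ H) (f : H) : H :=
  haveI : CompleteSpace K.topologicalClosure := K.isClosed_topologicalClosure.completeSpace_coe
  (Submodule.orthogonalProjectionOnto K.topologicalClosure f : H)

section aux
variable {H : Type*} [NormedAddCommGroup H] [InnerProductSpace ℂ H] [CompleteSpace H]

lemma proj_mem (K : Submodule ℂ H) (f : H) : proj K f ∈ K.topologicalClosure := by
  haveI : CompleteSpace K.topologicalClosure := K.isClosed_topologicalClosure.completeSpace_coe
  exact (Submodule.orthogonalProjectionOnto K.topologicalClosure f).2

lemma proj_inner_zero (K : Submodule ℂ H) (f w : H) (hw : w ∈ K.topologicalClosure) :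
    (inner ℂ (f - proj K f) w : ℂ) = 0 := by
  haveI : CompleteSpace K.topologicalClosure := K.isClosed_topologicalClosure.completeSpace_coe
  exact Submodule.starProjection_inner_eq_zero (K := K.topologicalClosure) f w hw

lemma proj_min (K : Submodule ℂ H) (f g : H) (hg : g ∈ K.topologicalClosure) :
    ‖f - proj K f‖ ≤ ‖f - g‖ := by
  haveI : CompleteSpace K.topologicalClosure := K.isClosed_topologicalClosure.completeSpace_coe
  rw [proj, ← Submodule.starProjection_apply, Submodule.starProjection_minimal]
  exact ciInf_le ⟨0, by rintro x ⟨y, rfl⟩; positivity⟩ (⟨g, hg⟩ : K.topologicalClosure)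

/-- Recurrence lemma: if `a (k+1) ≤ a k - (a k)^2 / A`, `a 1 ≤ A`, `a` nonneg, then
`a n ≤ A / n`. -/
lemma greedy_rec (a : ℕ → ℝ) (A : ℝ) (hA : 0 < A) (ha0 : ∀ n, 0 ≤ a n)
    (h1 : a 1 ≤ A) (hrec : ∀ k, 1 ≤ k → a (k + 1) ≤ a k - (a k) ^ 2 / A) :
    ∀ n, 1 ≤ n → a n ≤ A / n := by
  intro n hn
  induction n with
  | zero => omega
  | succ m ih =>
    rcases Nat.lt_or_ge m 1 with h | hm
    · obtain rfl : m = 0 := by omega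
      simpa using h1
    · have hAm : a m ≤ A / m := ih hm
      have hkey := hrec m hm
      have hm1 : (1 : ℝ) ≤ (m : ℝ) := by exact_mod_cast hm
      have ham := ha0 m
      push_cast
      have hdiv : 0 ≤ (a m) ^ 2 / A := by positivity
      rcases le_or_gt (a m) (A / ((m : ℝ) + 1)) with hc | hc
      · linarith
      · have hmpos : (0 : ℝ) < (m : ℝ) := by linarith
        have hmp1 : (0 : ℝ) < (m : ℝ) + 1 := by linarith
        have h2 : A ≤ a m * ((m : ℝ) + 1) := by
          rw [div_lt_iff₀ hmp1] at hc; linarith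
        have h3 : a m * (m : ℝ) ≤ A := by
          rw [le_div_iff₀ hmpos] at hAm; linarith
        have h6 : (A - a m) * ((m : ℝ) + 1) ≤ A * m := by nlinarith
        have h7 : a m * ((A - a m) * ((m : ℝ) + 1)) ≤ a m * (A * m) :=
          mul_le_mul_of_nonneg_left h6 ham
        have h8 : (a m * (m : ℝ)) * A ≤ A * A :=
          mul_le_mul_of_nonneg_right h3 hA.le
        have target : a m - (a m) ^ 2 / A ≤ A / ((m : ℝ) + 1) := by
          rw [sub_le_iff_le_add, div_add_div _ _ (ne_of_gt hmp1) (ne_of_gt hA),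
            le_div_iff₀ (by positivity)]
          nlinarith
        linarith
end aux

/-- Error bound of OGA: for `f ∈ H(D,M)` and maximal greedy selections `ψ k`, with
residuals `fk n = f - P_{H_{n-1}} f` and `v k = ‖ψ k - P_{H_{k-1}} ψ k‖ > 0`, one has
`‖fk n‖ ≤ M / √n`. -/
theorem stmt6 {H : Type*} [NormedAddCommGroup H] [InnerProductSpace ℂ H] [CompleteSpace H]
    (D : Set H) (hD_unit : ∀ φ ∈ D, ‖φ‖ = 1)
    (hD_span : (Submodule.span ℂ D).topologicalClosure = ⊤)
    (M : ℝ) (hM : 0 < M)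
    (c : ℕ → ℂ) (ψt : ℕ → H) (hψt : ∀ j, ψt j ∈ D)
    (f : H) (hf : HasSum (fun j => c j • ψt j) f)
    (hc_summable : Summable fun j => ‖c j‖) (hcM : ∑' j, ‖c j‖ ≤ M)
    (ψ : ℕ → H) (hψD : ∀ k, 1 ≤ k → ψ k ∈ D)
    (Hk : ℕ → Submodule ℂ H)
    (hHk : ∀ k, Hk k = Submodule.span ℂ (ψ '' {j | 1 ≤ j ∧ j ≤ k}))
    (fk : ℕ → H) (hfk : ∀ n, 1 ≤ n → fk n = f - proj (Hk (n - 1)) f)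
    (hsel : ∀ k, 1 ≤ k →
      (⨆ φ : D, ‖(inner ℂ (fk k) (φ : H) : ℂ)‖) ≤ ‖(inner ℂ (fk k) (ψ k) : ℂ)‖)
    (hv : ∀ k, 1 ≤ k → 0 < ‖ψ k - proj (Hk (k - 1)) (ψ k)‖) :
    ∀ n, 1 ≤ n → ‖fk n‖ ≤ M / Real.sqrt n := by
  -- (A): ‖fk k‖^2 ≤ M * ‖⟪fk k, ψ k⟫‖
  have hA : ∀ k, 1 ≤ k → ‖fk k‖ ^ 2 ≤ M * ‖(inner ℂ (fk k) (ψ k) : ℂ)‖ := by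
    intro k hk
    set B := ‖(inner ℂ (fk k) (ψ k) : ℂ)‖ with hB
    -- inner ℂ (fk k) f = ‖fk k‖^2 (as real part)
    have horth : (inner ℂ (fk k) (proj (Hk (k - 1)) f) : ℂ) = 0 := by
      rw [hfk k hk]
      exact proj_inner_zero _ _ _ (proj_mem _ _)
    have hself : ‖fk k‖ ^ 2 = (inner ℂ (fk k) f : ℂ).re := by
      have : (inner ℂ (fk k) f : ℂ) = inner ℂ (fk k) (fk k) := by
        rw [hfk k hk]
        have : (inner ℂ (f - proj (Hk (k-1)) f) f : ℂ)
            = inner ℂ (f - proj (Hk (k-1)) f) (f - proj (Hk (k-1)) f)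
              + inner ℂ (f - proj (Hk (k-1)) f) (proj (Hk (k-1)) f) := by
          rw [← inner_add_right, sub_add_cancel]
        rw [this, ← hfk k hk, horth, add_zero]
      rw [this]
      exact (inner_self_eq_norm_sq (𝕜 := ℂ) (fk k)).symm
    -- expand inner ℂ (fk k) f as a sum
    have hsum : HasSum (fun j => c j * (inner ℂ (fk k) (ψt j) : ℂ)) (inner ℂ (fk k) f : ℂ) := by
      have := hf.mapL (innerSL ℂ (fk k))
      simpa [inner_smul_right] using this
    have hBnn : 0 ≤ B := norm_nonneg _
    -- bound each term
    have hbound : ∀ j, ‖(inner ℂ (fk k) (ψt j) : ℂ)‖ ≤ B := by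
      intro j
      have hbdd : BddAbove (Set.range fun φ : D => ‖(inner ℂ (fk k) (φ : H) : ℂ)‖) := by
        refine ⟨‖fk k‖, ?_⟩
        rintro x ⟨φ, rfl⟩
        calc ‖(inner ℂ (fk k) (φ : H) : ℂ)‖ ≤ ‖fk k‖ * ‖(φ : H)‖ := norm_inner_le_norm _ _
          _ = ‖fk k‖ := by rw [hD_unit _ φ.2, mul_one]
      exact le_trans (le_ciSup hbdd (⟨ψt j, hψt j⟩ : D)) (hsel k hk)
    have hsummable : Summable fun j => ‖c j * (inner ℂ (fk k) (ψt j) : ℂ)‖ := by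
      apply Summable.of_nonneg_of_le (fun j => norm_nonneg _)
        (fun j => ?_) (hc_summable.mul_right B)
      rw [norm_mul]
      exact mul_le_mul_of_nonneg_left (hbound j) (norm_nonneg _)
    have hnorm : ‖(inner ℂ (fk k) f : ℂ)‖ ≤ ∑' j, ‖c j * (inner ℂ (fk k) (ψt j) : ℂ)‖ := by
      rw [← hsum.tsum_eq]
      exact norm_tsum_le_tsum_norm hsummable
    have htsum_le : (∑' j, ‖c j * (inner ℂ (fk k) (ψt j) : ℂ)‖) ≤ M * B := by
      calc (∑' j, ‖c j * (inner ℂ (fk k) (ψt j) : ℂ)‖)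
          ≤ ∑' j, ‖c j‖ * B := by
            apply Summable.tsum_le_tsum _ hsummable (hc_summable.mul_right B)
            intro j
            rw [norm_mul]
            exact mul_le_mul_of_nonneg_left (hbound j) (norm_nonneg _)
        _ = (∑' j, ‖c j‖) * B := by rw [tsum_mul_right]
        _ ≤ M * B := mul_le_mul_of_nonneg_right hcM hBnn
    calc ‖fk k‖ ^ 2 = (inner ℂ (fk k) f : ℂ).re := hself
      _ ≤ ‖(inner ℂ (fk k) f : ℂ)‖ := Complex.re_le_norm _
      _ ≤ M * B := hnorm.trans htsum_le
  -- (B): ‖fk (k+1)‖^2 ≤ ‖fk k‖^2 - ‖⟪fk k, ψ k⟫‖^2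
  have hB : ∀ k, 1 ≤ k → ‖fk (k + 1)‖ ^ 2 ≤ ‖fk k‖ ^ 2 - ‖(inner ℂ (fk k) (ψ k) : ℂ)‖ ^ 2 := by
    intro k hk
    have hmem : proj (Hk (k - 1)) f + (inner ℂ (ψ k) (fk k) : ℂ) • ψ k
        ∈ (Hk k).topologicalClosure := by
      apply Submodule.add_mem
      · have hsub : Hk (k - 1) ≤ Hk k := by
          rw [hHk, hHk]
          apply Submodule.span_mono
          apply Set.image_mono
          intro j hj
          exact ⟨hj.1, le_trans hj.2 (Nat.sub_le k 1)⟩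
        exact Submodule.topologicalClosure_mono hsub (proj_mem _ _)
      · apply Submodule.smul_mem
        apply Submodule.le_topologicalClosure
        rw [hHk]
        exact Submodule.subset_span ⟨k, ⟨hk, le_refl k⟩, rfl⟩
    have hstep : ‖fk (k + 1)‖ ≤ ‖fk k - (inner ℂ (ψ k) (fk k) : ℂ) • ψ k‖ := by
      have h1 : fk (k + 1) = f - proj (Hk k) f := by
        have := hfk (k + 1) (by omega)
        simpa using this
      have h2 : f - (proj (Hk (k - 1)) f + (inner ℂ (ψ k) (fk k) : ℂ) • ψ k)
          = fk k - (inner ℂ (ψ k) (fk k) : ℂ) • ψ k := by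
        rw [hfk k hk]; abel
      rw [h1, ← h2]
      exact proj_min _ _ _ hmem
    have hψnorm : ‖ψ k‖ = 1 := hD_unit _ (hψD k hk)
    have hwt : ‖(inner ℂ (ψ k) (fk k) : ℂ)‖ = ‖(inner ℂ (fk k) (ψ k) : ℂ)‖ := by
      rw [← inner_conj_symm (fk k) (ψ k), RCLike.norm_conj]
    have h4 : RCLike.re ((inner ℂ (ψ k) (fk k) : ℂ) * (inner ℂ (fk k) (ψ k) : ℂ))
        = ‖(inner ℂ (fk k) (ψ k) : ℂ)‖ ^ 2 := by
      rw [← inner_conj_symm (ψ k) (fk k), mul_comm, Complex.mul_conj]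
      simp only [RCLike.re_to_complex, Complex.ofReal_re, RCLike.norm_conj]
      rw [← Complex.sq_norm]
    have hexp : ‖fk k - (inner ℂ (ψ k) (fk k) : ℂ) • ψ k‖ ^ 2
        = ‖fk k‖ ^ 2 - ‖(inner ℂ (fk k) (ψ k) : ℂ)‖ ^ 2 := by
      rw [norm_sub_sq (𝕜 := ℂ), inner_smul_right, h4, norm_smul, hψnorm, mul_one, hwt]
      ring
    calc ‖fk (k + 1)‖ ^ 2 ≤ ‖fk k - (inner ℂ (ψ k) (fk k) : ℂ) • ψ k‖ ^ 2 := by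
          apply pow_le_pow_left₀ (norm_nonneg _) hstep
      _ = ‖fk k‖ ^ 2 - ‖(inner ℂ (fk k) (ψ k) : ℂ)‖ ^ 2 := hexp
  -- combine into recurrence for a n = ‖fk n‖^2
  set a : ℕ → ℝ := fun n => ‖fk n‖ ^ 2 with ha
  have ha0 : ∀ n, 0 ≤ a n := fun n => sq_nonneg _
  have hfkM : ∀ k, 1 ≤ k → ‖fk k‖ ≤ M := by
    intro k hk
    have h1 := hA k hk
    have h2 : ‖(inner ℂ (fk k) (ψ k) : ℂ)‖ ≤ ‖fk k‖ := by
      calc ‖(inner ℂ (fk k) (ψ k) : ℂ)‖ ≤ ‖fk k‖ * ‖ψ k‖ := norm_inner_le_norm _ _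
        _ = ‖fk k‖ := by rw [hD_unit _ (hψD k hk), mul_one]
    nlinarith [norm_nonneg (fk k)]
  have hrec : ∀ k, 1 ≤ k → a (k + 1) ≤ a k - (a k) ^ 2 / (M ^ 2) := by
    intro k hk
    show ‖fk (k + 1)‖ ^ 2 ≤ ‖fk k‖ ^ 2 - (‖fk k‖ ^ 2) ^ 2 / (M ^ 2)
    have h1 := hA k hk
    have h2 := hB k hk
    have h3 : 0 ≤ ‖(inner ℂ (fk k) (ψ k) : ℂ)‖ := norm_nonneg _
    have hXnn : (0:ℝ) ≤ ‖fk k‖ ^ 2 := sq_nonneg _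
    have h5 : (‖fk k‖ ^ 2) ^ 2 / M ^ 2 ≤ ‖(inner ℂ (fk k) (ψ k) : ℂ)‖ ^ 2 := by
      rw [div_le_iff₀ (by positivity)]
      have := mul_self_le_mul_self hXnn h1
      nlinarith
    linarith
  have h1 : a 1 ≤ M ^ 2 := by
    show ‖fk 1‖ ^ 2 ≤ M ^ 2
    nlinarith [hfkM 1 (le_refl 1), norm_nonneg (fk 1)]
  have hmain := greedy_rec a (M ^ 2) (by positivity) ha0 h1 hrec
  intro n hn
  have := hmain n hn
  have hnpos : (0 : ℝ) < n := by exact_mod_cast hn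
  have hsq : ‖fk n‖ ^ 2 ≤ (M / Real.sqrt n) ^ 2 := by
    rw [div_pow, Real.sq_sqrt (le_of_lt hnpos)]
    exact this
  have hrhs : 0 ≤ M / Real.sqrt n := by positivity
  calc ‖fk n‖ = Real.sqrt (‖fk n‖ ^ 2) := (Real.sqrt_sq (norm_nonneg _)).symm
    _ ≤ Real.sqrt ((M / Real.sqrt n) ^ 2) := Real.sqrt_le_sqrt hsq
    _ = M / Real.sqrt n := Real.sqrt_sq hrhs
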